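/- Let k ≥ 2, ℓ < k, m ≥ 1 be integers and set t = km + 1. Let H = (V, E) be a k-uniform hypergraph and let f_1, …, f_m be ℓ-element subsets of V such that each f_i is the root of a delta system of size t in H. Then there exist edges e_1, …, e_m ∈ E such that f_i ⊆ e_i for every i, and e_i ∩ e_j = f_i ∩ f_j for all distinct i, j. In particular, if f_1, …, f_{n²} (with m = n²) form a copy of K^{(ℓ)}_{n,n}, then e_1, …, e_{n²} form a copy of K^{(k)}_{n,n} in H. -/

import Mathlib

open Cardinal

universe u

/-- `d` is the root of a delta system of size `t` in the hypergraph with edge set `E`. -/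
def IsRootOfDelta {V : Type u} (E : Set (Set V)) (t : ℕ) (d : Set V) : Prop :=
  ∃ D : Set (Set V), D ⊆ E ∧ D.ncard = t ∧ ⋂₀ D = d ∧
    ∀ e ∈ D, ∀ e' ∈ D, e ≠ e' → e ∩ e' = d

/-- From a delta system of size `t` with root `d`, one can pick a petal avoiding any
finite set `B` disjoint from `d` with fewer than `t` elements. -/
lemma exists_petal_avoiding {V : Type u} {E : Set (Set V)} {t : ℕ} {d : Set V}
    (h : IsRootOfDelta E t d) (B : Set V) (hB : B.Finite) (hBd : ∀ v ∈ B, v ∉ d)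
    (hcard : B.ncard < t) :
    ∃ e ∈ E, d ⊆ e ∧ ∀ v ∈ B, v ∉ e := by
  classical
  obtain ⟨D, hDE, hDcard, hDint, hDpair⟩ := h
  have ht : t ≠ 0 := by omega
  have hDfin : D.Finite := Set.finite_of_ncard_ne_zero (by rw [hDcard]; exact ht)
  have hsub : ∀ e ∈ D, d ⊆ e := fun e he => hDint ▸ Set.sInter_subset_of_mem he
  rcases B.eq_empty_or_nonempty with hBe | ⟨v0, hv0⟩
  · obtain ⟨e, he⟩ : D.Nonempty := Set.nonempty_of_ncard_ne_zero (by rw [hDcard]; exact ht)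
    exact ⟨e, hDE he, hsub e he, by simp [hBe]⟩
  · haveI : Nonempty V := ⟨v0⟩
    set Dbad : Set (Set V) := {e | e ∈ D ∧ (e ∩ B).Nonempty} with hDbad
    set φ : Set V → V := fun e =>
      if h : (e ∩ B).Nonempty then h.choose else Classical.arbitrary V with hφ
    have hφmem : ∀ e ∈ Dbad, φ e ∈ e ∩ B := by
      intro e he
      simp only [hφ, dif_pos he.2]
      exact he.2.choose_spec
    have hinj : Set.InjOn φ Dbad := by
      intro e he e' he' hee
      by_contra hne
      have h1 := hφmem e he
      have h2 := hφmem e' he'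
      have : φ e ∈ e ∩ e' := ⟨h1.1, hee ▸ h2.1⟩
      rw [hDpair e he.1 e' he'.1 hne] at this
      exact hBd _ h1.2 this
    have hcard2 : Dbad.ncard ≤ B.ncard :=
      Set.ncard_le_ncard_of_injOn φ (fun e he => (hφmem e he).2) hinj hB
    have : ¬ (D ⊆ Dbad) := by
      intro hDD
      have := Set.ncard_le_ncard hDD (hDfin.subset (fun e he => he.1))
      omega
    obtain ⟨e, heD, heb⟩ := Set.not_subset.mp this
    refine ⟨e, hDE heD, hsub e heD, ?_⟩
    intro v hvB hve
    exact heb ⟨heD, ⟨v, hve, hvB⟩⟩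

/-- Cardinality of a finite union of uniformly small finite sets. -/
lemma finite_ncard_iUnion {V : Type u} {c : ℕ} :
    ∀ (n : ℕ) (g : Fin n → Set V), (∀ i, (g i).Finite) → (∀ i, (g i).ncard ≤ c) →
      (⋃ i, g i).Finite ∧ (⋃ i, g i).ncard ≤ n * c := by
  intro n
  induction n with
  | zero => intro g _ _; simp
  | succ n ih =>
    intro g hfin hc
    have hsplit : (⋃ i, g i) = (⋃ i : Fin n, g i.castSucc) ∪ g (Fin.last n) := by
      ext v
      simp only [Set.mem_iUnion, Set.mem_union]
      constructor
      · rintro ⟨i, hi⟩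
        rcases Fin.eq_castSucc_or_eq_last i with ⟨j, rfl⟩ | rfl
        · exact Or.inl ⟨j, hi⟩
        · exact Or.inr hi
      · rintro (⟨j, hj⟩ | hl)
        · exact ⟨j.castSucc, hj⟩
        · exact ⟨Fin.last n, hl⟩
    obtain ⟨h1, h2⟩ := ih (fun i => g i.castSucc) (fun i => hfin _) (fun i => hc _)
    constructor
    · rw [hsplit]; exact h1.union (hfin _)
    · rw [hsplit]
      calc ((⋃ i : Fin n, g i.castSucc) ∪ g (Fin.last n)).ncard
          ≤ (⋃ i : Fin n, g i.castSucc).ncard + (g (Fin.last n)).ncard :=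
            Set.ncard_union_le _ _
        _ ≤ n * c + c := Nat.add_le_add h2 (hc _)
        _ = (n + 1) * c := by ring

theorem exists_extension_of_roots {V : Type u} (k l m : ℕ) (hk : 2 ≤ k)
    (hlk : l < k) (hm : 1 ≤ m)
    (E : Set (Set V)) (hUnif : ∀ e ∈ E, e.ncard = k)
    (f : Fin m → Set V) (hf : ∀ i, (f i).ncard = l)
    (hroot : ∀ i, IsRootOfDelta E (k * m + 1) (f i)) :
    ∃ e : Fin m → Set V,
      (∀ i, e i ∈ E) ∧ (∀ i, f i ⊆ e i) ∧
      (∀ i j, i ≠ j → e i ∩ e j = f i ∩ f j) ∧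
      -- in particular: if the `f`'s form a copy of `K^{(ℓ)}_{n,n}`,
      -- then the `e`'s form a copy of `K^{(k)}_{n,n}`
      ∀ (n : ℕ) (σ : Fin n × Fin n → Fin m), Function.Bijective σ →
        ∀ x y : Fin n → V, Function.Injective (Sum.elim x y) →
          (∀ p : Fin n × Fin n, x p.1 ∈ f (σ p) ∧ y p.2 ∈ f (σ p)) →
          (∀ p q : Fin n × Fin n, p ≠ q →
            f (σ p) ∩ f (σ q) = ({x p.1, y p.2} : Set V) ∩ {x q.1, y q.2}) →
          (∀ p : Fin n × Fin n, x p.1 ∈ e (σ p) ∧ y p.2 ∈ e (σ p)) ∧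
            ∀ p q : Fin n × Fin n, p ≠ q →
              e (σ p) ∩ e (σ q) = ({x p.1, y p.2} : Set V) ∩ {x q.1, y q.2} := by
  classical
  have hEfin : ∀ e ∈ E, Set.Finite e := fun e he =>
    Set.finite_of_ncard_ne_zero (by rw [hUnif e he]; omega)
  have hffin : ∀ j : Fin m, (f j).Finite := by
    intro j
    obtain ⟨D, hDE, hDcard, hDint, _⟩ := hroot j
    obtain ⟨e0, he0⟩ : D.Nonempty :=
      Set.nonempty_of_ncard_ne_zero (by rw [hDcard]; omega)
    exact (hEfin e0 (hDE he0)).subset (hDint ▸ Set.sInter_subset_of_mem he0)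
  -- main greedy construction
  have key : ∀ n, n ≤ m → ∃ g : ℕ → Set V,
      (∀ i, i < n → g i ∈ E) ∧
      (∀ i (hi : i < n) (hi' : i < m), f ⟨i, hi'⟩ ⊆ g i) ∧
      (∀ i j (hi : i < n) (hj : j < n), i ≠ j → ∀ (hi' : i < m) (hj' : j < m),
        g i ∩ g j = f ⟨i, hi'⟩ ∩ f ⟨j, hj'⟩) ∧
      (∀ i (hi : i < n) (hi' : i < m), ∀ jf : Fin m, jf ≠ ⟨i, hi'⟩ →
        g i ∩ f jf ⊆ f ⟨i, hi'⟩) := by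
    intro n
    induction n with
    | zero =>
      intro _
      exact ⟨fun _ => ∅, fun i hi => absurd hi (by omega),
        fun i hi => absurd hi (by omega),
        fun i j hi => absurd hi (by omega),
        fun i hi => absurd hi (by omega)⟩
    | succ n ih =>
      intro hn
      obtain ⟨g, hg1, hg2, hg3, hg4⟩ := ih (by omega)
      have hnm : n < m := hn
      set nm : Fin m := ⟨n, hnm⟩ with hnmdef
      -- the bad set
      set P1 : Set V := ⋃ i : Fin n, g i.val with hP1
      set P2 : Set V := ⋃ j : Fin (m - n - 1), f ⟨n + 1 + j.val, by omega⟩ with hP2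
      set B : Set V := (P1 ∪ P2) \ f nm with hB
      have hP1fin : P1.Finite ∧ P1.ncard ≤ n * k := by
        apply finite_ncard_iUnion
        · exact fun i => hEfin _ (hg1 i.val i.isLt)
        · exact fun i => le_of_eq (hUnif _ (hg1 i.val i.isLt))
      have hP2fin : P2.Finite ∧ P2.ncard ≤ (m - n - 1) * l := by
        apply finite_ncard_iUnion
        · exact fun j => hffin _
        · exact fun j => le_of_eq (hf _)
      have hBfin : B.Finite := ((hP1fin.1.union hP2fin.1).diff)
      have hBcard : B.ncard < k * m + 1 := by
        have h0 : B.ncard ≤ P1.ncard + P2.ncard := by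
          calc B.ncard ≤ (P1 ∪ P2).ncard :=
                Set.ncard_le_ncard Set.diff_subset (hP1fin.1.union hP2fin.1)
            _ ≤ P1.ncard + P2.ncard := Set.ncard_union_le _ _
        calc B.ncard ≤ P1.ncard + P2.ncard := h0
          _ ≤ n * k + (m - n - 1) * l := Nat.add_le_add hP1fin.2 hP2fin.2
          _ ≤ n * k + (m - n - 1) * k :=
              Nat.add_le_add_left (Nat.mul_le_mul_left _ hlk.le) _
          _ = (n + (m - n - 1)) * k := by ring
          _ = (m - 1) * k := by congr 1; omega
          _ ≤ m * k := Nat.mul_le_mul_right _ (by omega)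
          _ = k * m := Nat.mul_comm _ _
          _ < k * m + 1 := Nat.lt_succ_self _
      obtain ⟨en, henE, henf, hene⟩ :=
        exists_petal_avoiding (hroot nm) B hBfin (fun v hv => hv.2) hBcard
      refine ⟨fun i => if i = n then en else g i, ?_, ?_, ?_, ?_⟩
      · intro i hi
        by_cases h : i = n
        · simpa [h] using henE
        · simpa [h] using hg1 i (by omega)
      · intro i hi hi'
        by_cases h : i = n
        · subst h; simpa using henf
        · simpa [h] using hg2 i (by omega) hi'
      · -- key intersection property
        have main : ∀ j, j < n → ∀ (hj' : j < m), en ∩ g j = f nm ∩ f ⟨j, hj'⟩ := by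
          intro j hj hj'
          apply Set.Subset.antisymm
          · intro v ⟨hv1, hv2⟩
            have hvfn : v ∈ f nm := by
              by_contra hvf
              exact hene v ⟨Or.inl (Set.mem_iUnion.mpr ⟨⟨j, hj⟩, hv2⟩), hvf⟩ hv1
            refine ⟨hvfn, ?_⟩
            exact hg4 j hj hj' nm (by simp [hnmdef, Fin.ext_iff]; omega) ⟨hv2, hvfn⟩
          · intro v ⟨hv1, hv2⟩
            exact ⟨henf hv1, hg2 j hj hj' hv2⟩
        intro i j hi hj hij hi' hj'
        by_cases h1 : i = n <;> by_cases h2 : j = n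
        · omega
        · subst h1
          simp only [if_pos rfl, if_neg h2]
          exact main j (by omega) hj'
        · subst h2
          simp only [if_pos rfl, if_neg h1]
          rw [Set.inter_comm, Set.inter_comm (f ⟨i, hi'⟩)]
          exact main i (by omega) hi'
        · simp only [if_neg h1, if_neg h2]
          exact hg3 i j (by omega) (by omega) hij hi' hj'
      · intro i hi hi' jf hjf
        by_cases h : i = n
        · have hfi : (⟨i, hi'⟩ : Fin m) = nm := Fin.ext h
          rw [hfi] at hjf ⊢
          simp only [if_pos h]
          rintro v ⟨hv1, hv2⟩
          by_contra hvf
          rcases lt_trichotomy jf.val n with hlt | heq | hgt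
          · have hvg := hg2 jf.val hlt jf.isLt
            simp only [Fin.eta] at hvg
            exact hene v ⟨Or.inl (Set.mem_iUnion.mpr ⟨⟨jf.val, hlt⟩, hvg hv2⟩), hvf⟩ hv1
          · exact hjf (Fin.ext heq)
          · have hjm : jf.val < m := jf.isLt
            have hjfeq : (⟨n + 1 + (jf.val - n - 1), by omega⟩ : Fin m) = jf := by
              apply Fin.ext
              simp
              omega
            have hfe : f ⟨n + 1 + (jf.val - n - 1), by omega⟩ = f jf := congrArg f hjfeq
            have hv3 : v ∈ P2 := Set.mem_iUnion.mpr
              ⟨⟨jf.val - n - 1, by omega⟩, by rw [hfe]; exact hv2⟩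
            exact hene v ⟨Or.inr hv3, hvf⟩ hv1
        · simp only [if_neg h]
          exact hg4 i (by omega) hi' jf hjf
  obtain ⟨g, hg1, hg2, hg3, hg4⟩ := key m le_rfl
  refine ⟨fun i => g i.val, fun i => hg1 i.val i.isLt, ?_, ?_, ?_⟩
  · intro i
    have := hg2 i.val i.isLt i.isLt
    simpa using this
  · intro i j hij
    have := hg3 i.val j.val i.isLt j.isLt (fun h => hij (Fin.ext h)) i.isLt j.isLt
    simpa using this
  · intro n σ hσ x y hxy hmem hint
    have hsub : ∀ i, f i ⊆ g i.val := by
      intro i; have := hg2 i.val i.isLt i.isLt; simpa using this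
    have hgint : ∀ i j : Fin m, i ≠ j → g i.val ∩ g j.val = f i ∩ f j := by
      intro i j hij
      have := hg3 i.val j.val i.isLt j.isLt (fun h => hij (Fin.ext h)) i.isLt j.isLt
      simpa using this
    constructor
    · intro p
      exact ⟨hsub _ (hmem p).1, hsub _ (hmem p).2⟩
    · intro p q hpq
      have hσpq : σ p ≠ σ q := fun h => hpq (hσ.injective h)
      rw [hgint _ _ hσpq, hint p q hpq]
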